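/- Let d ≥ 1, let c be the 3-cycle (0 1 2) of Fin 3, and let M_− := W_c − W_{c⁻¹} (permutation operators of local dimension d). Then for all permutations π, σ of Fin 3: Tr[(M_−^A ⊗ M_−^B) · (W_π^A ⊗ W_σ^B)] = d²(d²−1)² if π and σ are 3-cycles with π = σ; it equals −d²(d²−1)² if π and σ are 3-cycles with π ≠ σ; and it equals 0 in all other cases (i.e., whenever π or σ is not a 3-cycle). Here both tensor factors have local dimension d. (Paper's Eq. (WAWBterm).) -/

import Mathlib

open Matrix Kronecker
noncomputable section
/-- Permutation operator `W_π` of local index `I`: `W_π[b,a] = 1` iff `b = a ∘ π`. -/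
def permOp (I : Type*) [DecidableEq I] {t : ℕ} (π : Equiv.Perm (Fin t)) :
    Matrix (Fin t → I) (Fin t → I) ℂ :=
  Matrix.of fun b a => if b = a ∘ ⇑π then 1 else 0
/-- the 3-cycle (0 1 2) of `Fin 3` -/
def c3 : Equiv.Perm (Fin 3) := finRotate 3

/-- `M₋ = W_c − W_{c⁻¹}` of local dimension `d`. -/
def Mminus (d : ℕ) : Matrix (Fin 3 → Fin d) (Fin 3 → Fin d) ℂ :=
  permOp (Fin d) c3 - permOp (Fin d) c3⁻¹

lemma permOp_mul (d : ℕ) (α β : Equiv.Perm (Fin 3)) :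
    permOp (Fin d) α * permOp (Fin d) β = permOp (Fin d) (β * α) := by
  ext b a
  simp [permOp, Matrix.mul_apply, Function.comp_assoc]
  congr

lemma classify : ∀ τ : Equiv.Perm (Fin 3),
    τ = 1 ∨ τ = c3 ∨ τ = c3⁻¹ ∨ τ = Equiv.swap 0 1 ∨ τ = Equiv.swap 0 2 ∨ τ = Equiv.swap 1 2 := by
  decide

lemma threecycle_iff : ∀ τ : Equiv.Perm (Fin 3), τ.IsThreeCycle ↔ τ = c3 ∨ τ = c3⁻¹ := by
  simp only [← card_support_eq_three_iff]; decide

def e3 (d : ℕ) : (Fin d × Fin d × Fin d) ≃ (Fin 3 → Fin d) where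
  toFun p := ![p.1, p.2.1, p.2.2]
  invFun a := (a 0, a 1, a 2)
  left_inv p := rfl
  right_inv a := by funext i; fin_cases i <;> rfl

lemma trace_permOp (d : ℕ) (τ : Equiv.Perm (Fin 3)) :
    (permOp (Fin d) τ).trace =
      ∑ x : Fin d, ∑ y : Fin d, ∑ z : Fin d,
        if (![x,y,z] : Fin 3 → Fin d) = ![x,y,z] ∘ ⇑τ then 1 else 0 := by
  rw [Matrix.trace, ← Equiv.sum_comp (e3 d)]
  simp only [Matrix.diag, permOp, Matrix.of_apply, e3, Equiv.coe_fn_mk, Fintype.sum_prod_type]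
  rfl

lemma comp_c3 (d : ℕ) (x y z : Fin d) : (![x,y,z] : Fin 3 → Fin d) ∘ ⇑c3 = ![y,z,x] := by
  funext i; fin_cases i <;> rfl

lemma comp_c3inv (d : ℕ) (x y z : Fin d) : (![x,y,z] : Fin 3 → Fin d) ∘ ⇑c3⁻¹ = ![z,x,y] := by
  funext i; fin_cases i <;> rfl

lemma vec_eq (d : ℕ) (x y z x' y' z' : Fin d) :
    (![x,y,z] : Fin 3 → Fin d) = ![x',y',z'] ↔ x = x' ∧ y = y' ∧ z = z' := by
  constructor
  · intro h; exact ⟨congrFun h 0, congrFun h 1, congrFun h 2⟩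
  · rintro ⟨rfl, rfl, rfl⟩; rfl

lemma trace_id (d : ℕ) : (permOp (Fin d) (1 : Equiv.Perm (Fin 3))).trace = (d:ℂ)^3 := by
  rw [trace_permOp]
  simp [Finset.card_univ]
  ring

lemma trace_c3 (d : ℕ) : (permOp (Fin d) c3).trace = (d:ℂ) := by
  rw [trace_permOp]
  simp only [comp_c3, vec_eq]
  have h : ∀ x y z : Fin d, (x = y ∧ y = z ∧ z = x) ↔ (y = x ∧ z = x) := by
    intro x y z
    constructor
    · rintro ⟨h1, h2, h3⟩; exact ⟨h1.symm, h3⟩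
    · rintro ⟨rfl, rfl⟩; exact ⟨rfl, rfl, rfl⟩
  simp [h, ite_and, Finset.sum_ite_eq']

lemma trace_c3inv (d : ℕ) : (permOp (Fin d) c3⁻¹).trace = (d:ℂ) := by
  rw [trace_permOp]
  simp only [comp_c3inv, vec_eq]
  have h : ∀ x y z : Fin d, (x = z ∧ y = x ∧ z = y) ↔ (y = x ∧ z = x) := by
    intro x y z
    constructor
    · rintro ⟨h1, h2, h3⟩; exact ⟨h2, h1.symm⟩
    · rintro ⟨rfl, rfl⟩; exact ⟨rfl, rfl, rfl⟩
  simp [h, ite_and, Finset.sum_ite_eq']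

lemma comp_s01 (d : ℕ) (x y z : Fin d) : (![x,y,z] : Fin 3 → Fin d) ∘ ⇑(Equiv.swap (0 : Fin 3) 1) = ![y,x,z] := by
  funext i; fin_cases i <;> rfl
lemma comp_s02 (d : ℕ) (x y z : Fin d) : (![x,y,z] : Fin 3 → Fin d) ∘ ⇑(Equiv.swap (0 : Fin 3) 2) = ![z,y,x] := by
  funext i; fin_cases i <;> rfl
lemma comp_s12 (d : ℕ) (x y z : Fin d) : (![x,y,z] : Fin 3 → Fin d) ∘ ⇑(Equiv.swap (1 : Fin 3) 2) = ![x,z,y] := by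
  funext i; fin_cases i <;> rfl

lemma trace_s01 (d : ℕ) : (permOp (Fin d) (Equiv.swap (0 : Fin 3) 1)).trace = (d:ℂ)^2 := by
  rw [trace_permOp]
  simp only [comp_s01, vec_eq]
  have h2 : ∀ x y : Fin d, (x = y ∧ y = x) ↔ y = x :=
    fun x y => ⟨fun a => a.2, fun a => ⟨a.symm, a⟩⟩
  simp [h2, Finset.sum_ite_eq', Finset.card_univ]
  ring

lemma trace_s02 (d : ℕ) : (permOp (Fin d) (Equiv.swap (0 : Fin 3) 2)).trace = (d:ℂ)^2 := by
  rw [trace_permOp]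
  simp only [comp_s02, vec_eq]
  have h2 : ∀ x y : Fin d, (x = y ∧ y = x) ↔ y = x :=
    fun x y => ⟨fun a => a.2, fun a => ⟨a.symm, a⟩⟩
  simp [h2, Finset.sum_ite_eq', Finset.card_univ]
  ring

lemma trace_s12 (d : ℕ) : (permOp (Fin d) (Equiv.swap (1 : Fin 3) 2)).trace = (d:ℂ)^2 := by
  rw [trace_permOp]
  simp only [comp_s12, vec_eq]
  have h2 : ∀ x y : Fin d, (x = y ∧ y = x) ↔ y = x :=
    fun x y => ⟨fun a => a.2, fun a => ⟨a.symm, a⟩⟩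
  simp [h2, Finset.sum_ite_eq', Finset.card_univ]
  ring


lemma trace_M (d : ℕ) (π : Equiv.Perm (Fin 3)) :
    (Mminus d * permOp (Fin d) π).trace =
      (permOp (Fin d) (π * c3)).trace - (permOp (Fin d) (π * c3⁻¹)).trace := by
  rw [Mminus, sub_mul, trace_sub, permOp_mul, permOp_mul]

lemma f_c3 (d : ℕ) : (Mminus d * permOp (Fin d) c3).trace = (d:ℂ) - (d:ℂ)^3 := by
  rw [trace_M, show c3 * c3 = c3⁻¹ from by decide, show c3 * c3⁻¹ = 1 from by decide,
    trace_c3inv, trace_id]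

lemma f_c3inv (d : ℕ) : (Mminus d * permOp (Fin d) c3⁻¹).trace = (d:ℂ)^3 - (d:ℂ) := by
  rw [trace_M, show c3⁻¹ * c3 = 1 from by decide, show c3⁻¹ * c3⁻¹ = c3 from by decide,
    trace_id, trace_c3]

lemma f_zero (d : ℕ) (π : Equiv.Perm (Fin 3)) (h : ¬π.IsThreeCycle) :
    (Mminus d * permOp (Fin d) π).trace = 0 := by
  rcases classify π with rfl|rfl|rfl|rfl|rfl|rfl
  · rw [trace_M, one_mul, one_mul, trace_c3, trace_c3inv, sub_self]
  · exact absurd ((threecycle_iff c3).mpr (Or.inl rfl)) h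
  · exact absurd ((threecycle_iff c3⁻¹).mpr (Or.inr rfl)) h
  · rw [trace_M, show Equiv.swap (0:Fin 3) 1 * c3 = Equiv.swap (1:Fin 3) 2 from by decide,
      show Equiv.swap (0:Fin 3) 1 * c3⁻¹ = Equiv.swap (0:Fin 3) 2 from by decide,
      trace_s12, trace_s02, sub_self]
  · rw [trace_M, show Equiv.swap (0:Fin 3) 2 * c3 = Equiv.swap (0:Fin 3) 1 from by decide,
      show Equiv.swap (0:Fin 3) 2 * c3⁻¹ = Equiv.swap (1:Fin 3) 2 from by decide,
      trace_s01, trace_s12, sub_self]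
  · rw [trace_M, show Equiv.swap (1:Fin 3) 2 * c3 = Equiv.swap (0:Fin 3) 2 from by decide,
      show Equiv.swap (1:Fin 3) 2 * c3⁻¹ = Equiv.swap (0:Fin 3) 1 from by decide,
      trace_s02, trace_s01, sub_self]

theorem stmt_16 (d : ℕ) (hd : 1 ≤ d) (π σ : Equiv.Perm (Fin 3)) :
    (π.IsThreeCycle → σ.IsThreeCycle →
      ((Mminus d ⊗ₖ Mminus d) * (permOp (Fin d) π ⊗ₖ permOp (Fin d) σ)).trace =
        if π = σ then (d : ℂ) ^ 2 * ((d : ℂ) ^ 2 - 1) ^ 2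
        else -((d : ℂ) ^ 2 * ((d : ℂ) ^ 2 - 1) ^ 2)) ∧
    (¬(π.IsThreeCycle ∧ σ.IsThreeCycle) →
      ((Mminus d ⊗ₖ Mminus d) * (permOp (Fin d) π ⊗ₖ permOp (Fin d) σ)).trace = 0) := by
  rw [← Matrix.mul_kronecker_mul, Matrix.trace_kronecker]
  constructor
  · intro hπ hσ
    rcases (threecycle_iff π).mp hπ with rfl|rfl <;> rcases (threecycle_iff σ).mp hσ with rfl|rfl
    · rw [if_pos rfl, f_c3]; ring
    · rw [if_neg (show c3 ≠ c3⁻¹ from by decide), f_c3, f_c3inv]; ring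
    · rw [if_neg (show c3⁻¹ ≠ c3 from by decide), f_c3, f_c3inv]; ring
    · rw [if_pos rfl, f_c3inv]; ring
  · intro h
    rcases not_and_or.mp h with h | h
    · rw [f_zero d π h, zero_mul]
    · rw [f_zero d σ h, mul_zero]
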